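/- Let n ≥ 2 and λ > 1, and let E_λ be the linear automorphism of ℝ^{n+1} = ℝ × ℝ^n multiplying the first coordinate by λ and fixing the remaining coordinates. Consider Ω⁺ := { v ∈ S^n : v_1 > 0 } ∖ { e_1 }, a component of the complement in S^n of the great hypersphere { v_1 = 0 } and the antipodal pair {±e_1}. Then the ℤ-action on Ω⁺ defined by m • v := E_λ^m v / ‖E_λ^m v‖ is well-defined, free, and properly discontinuous, and the quotient space Ω⁺/ℤ is homeomorphic to S^{n−1} × (ℝ/ℤ), where S^{n−1} is the unit sphere of ℝ^n. -/

import Mathlib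

noncomputable section

open Set

/-- `Ω⁺ := {v ∈ S^n : v₁ > 0} ∖ {e₁}` (with `v₁ = v 0` and `e₁` the first
standard basis vector), a component of the complement in `S^n` of the great
hypersphere `{v₁ = 0}` and the antipodal pair `{±e₁}`. -/
def OmegaPlus (n : ℕ) : Set (EuclideanSpace ℝ (Fin (n + 1))) :=
  {v | ‖v‖ = 1 ∧ 0 < v 0} \ {EuclideanSpace.single (0 : Fin (n + 1)) (1 : ℝ)}

/-- `E_λ^m`: the linear automorphism multiplying the first coordinate by `λ^m`
and fixing the remaining coordinates. -/
def Emap (n : ℕ) (lam : ℝ) (m : ℤ) (v : EuclideanSpace ℝ (Fin (n + 1))) :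
    EuclideanSpace ℝ (Fin (n + 1)) :=
  WithLp.toLp 2 (fun k : Fin (n + 1) => (if (k : ℕ) = 0 then lam ^ m else 1) * v k)

/-- The projectivized action `m • v := E_λ^m v / ‖E_λ^m v‖`. -/
def normActE (n : ℕ) (lam : ℝ) (m : ℤ) (v : EuclideanSpace ℝ (Fin (n + 1))) :
    EuclideanSpace ℝ (Fin (n + 1)) :=
  ‖Emap n lam m v‖⁻¹ • Emap n lam m v

/-- The orbit equivalence relation of the `ℤ`-action on `Ω⁺`. -/
def orbitRelE (n : ℕ) (lam : ℝ) (v w : ↥(OmegaPlus n)) : Prop :=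
  ∃ m : ℤ, normActE n lam m ↑v = ↑w

namespace Aux
variable {n : ℕ} {lam : ℝ}

/-- tail of a vector -/
def tl (v : EuclideanSpace ℝ (Fin (n + 1))) : EuclideanSpace ℝ (Fin n) :=
  WithLp.toLp 2 (fun k : Fin n => v k.succ)

lemma tl_apply (v : EuclideanSpace ℝ (Fin (n + 1))) (k : Fin n) : tl v k = v k.succ := rfl

lemma continuous_tl : Continuous (tl (n := n)) := by
  have h1 : Continuous fun v : EuclideanSpace ℝ (Fin (n+1)) =>
      (fun k : Fin n => v k.succ : Fin n → ℝ) :=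
    continuous_pi fun k => (EuclideanSpace.proj k.succ).continuous
  exact (PiLp.continuous_toLp 2 fun _ : Fin n => ℝ).comp h1

lemma norm_sq (v : EuclideanSpace ℝ (Fin (n + 1))) : ‖v‖ ^ 2 = v 0 ^ 2 + ‖tl v‖ ^ 2 := by
  rw [EuclideanSpace.norm_eq, EuclideanSpace.norm_eq, Real.sq_sqrt (by positivity),
    Real.sq_sqrt (by positivity), Fin.sum_univ_succ]
  simp [tl, sq_abs]

lemma smul_apply (c : ℝ) (v : EuclideanSpace ℝ (Fin (n+1))) (k : Fin (n+1)) :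
    (c • v) k = c * v k := rfl

lemma tl_smul (c : ℝ) (v : EuclideanSpace ℝ (Fin (n + 1))) : tl (c • v) = c • tl v := by
  ext k; simp [tl]


lemma Emap_zero (v : EuclideanSpace ℝ (Fin (n + 1))) : Emap n lam 0 v = v := by
  ext k; simp [Emap]

lemma Emap_apply_zero (m : ℤ) (v : EuclideanSpace ℝ (Fin (n + 1))) :
    Emap n lam m v 0 = lam ^ m * v 0 := by simp [Emap]

lemma tl_Emap (m : ℤ) (v : EuclideanSpace ℝ (Fin (n + 1))) : tl (Emap n lam m v) = tl v := by
  ext k; simp [Emap, tl]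

lemma Emap_smul (m : ℤ) (c : ℝ) (v : EuclideanSpace ℝ (Fin (n + 1))) :
    Emap n lam m (c • v) = c • Emap n lam m v := by
  ext k; simp [Emap, smul_apply]; ring

lemma Emap_Emap (hlam : 0 < lam) (m₁ m₂ : ℤ) (v : EuclideanSpace ℝ (Fin (n + 1))) :
    Emap n lam m₁ (Emap n lam m₂ v) = Emap n lam (m₁ + m₂) v := by
  ext k; simp only [Emap]
  by_cases h : (k : ℕ) = 0 <;> simp [h, zpow_add₀ (ne_of_gt hlam)] <;> ring

lemma Emap_ne_zero (hlam : 0 < lam) (m : ℤ) {v : EuclideanSpace ℝ (Fin (n + 1))}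
    (hv : v ≠ 0) : Emap n lam m v ≠ 0 := by
  intro h
  apply hv
  ext k
  have := congrArg (fun w => w k) h
  by_cases hk : (k : ℕ) = 0
  · simpa [Emap, hk, (Fin.ext hk : k = 0), zpow_ne_zero m (ne_of_gt hlam)] using this
  · simp only [Emap, WithLp.ofLp_toLp, if_neg hk, one_mul] at this
    simpa using this

lemma norm_Emap_pos (hlam : 0 < lam) (m : ℤ) {v : EuclideanSpace ℝ (Fin (n + 1))}
    (hv : v ≠ 0) : 0 < ‖Emap n lam m v‖ :=
  norm_pos_iff.2 (Emap_ne_zero hlam m hv)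

lemma mem_omega_iff {v : EuclideanSpace ℝ (Fin (n + 1))} :
    v ∈ OmegaPlus n ↔ ‖v‖ = 1 ∧ 0 < v 0 ∧
      v ≠ EuclideanSpace.single (0 : Fin (n + 1)) (1 : ℝ) := by
  constructor
  · rintro ⟨⟨h1, h2⟩, h3⟩; exact ⟨h1, h2, h3⟩
  · rintro ⟨h1, h2, h3⟩; exact ⟨⟨h1, h2⟩, h3⟩

lemma ne_zero_of_mem {v : EuclideanSpace ℝ (Fin (n + 1))} (hv : v ∈ OmegaPlus n) : v ≠ 0 := by
  intro h
  have := hv.1.1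
  rw [h] at this
  simp at this

lemma tl_ne_zero {v : EuclideanSpace ℝ (Fin (n + 1))} (hv : v ∈ OmegaPlus n) : tl v ≠ 0 := by
  rcases mem_omega_iff.1 hv with ⟨h1, h2, h3⟩
  intro ht
  apply h3
  have hnorm : ‖tl v‖ = 0 := by rw [ht]; simp
  have hsq : v 0 ^ 2 = 1 := by
    have := norm_sq v
    rw [h1, hnorm] at this
    nlinarith
  have hv0 : v 0 = 1 := by nlinarith
  ext k
  rcases Fin.eq_zero_or_eq_succ k with rfl | ⟨j, rfl⟩
  · simpa [EuclideanSpace.single_apply] using hv0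
  · have : tl v j = 0 := by rw [ht]; rfl
    rw [tl_apply] at this
    simp [EuclideanSpace.single_apply, Fin.succ_ne_zero, this]

lemma norm_tl_pos {v : EuclideanSpace ℝ (Fin (n + 1))} (hv : v ∈ OmegaPlus n) :
    0 < ‖tl v‖ := norm_pos_iff.2 (tl_ne_zero hv)


/-- the ratio invariant -/
def rho (v : EuclideanSpace ℝ (Fin (n + 1))) : ℝ := v 0 / ‖tl v‖

lemma rho_pos {v : EuclideanSpace ℝ (Fin (n + 1))} (hv : v ∈ OmegaPlus n) : 0 < rho v :=
  div_pos hv.1.2 (norm_tl_pos hv)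

lemma norm_normActE (hlam : 0 < lam) (m : ℤ) {v : EuclideanSpace ℝ (Fin (n + 1))}
    (hv : v ≠ 0) : ‖normActE n lam m v‖ = 1 := by
  have h := norm_Emap_pos (n := n) hlam m hv
  rw [normActE, norm_smul, norm_inv, norm_norm, inv_mul_cancel₀ (ne_of_gt h)]

lemma normActE_apply_zero (m : ℤ) (v : EuclideanSpace ℝ (Fin (n + 1))) :
    normActE n lam m v 0 = ‖Emap n lam m v‖⁻¹ * (lam ^ m * v 0) := by
  rw [normActE, smul_apply, Emap_apply_zero]

lemma tl_normActE (m : ℤ) (v : EuclideanSpace ℝ (Fin (n + 1))) :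
    tl (normActE n lam m v) = ‖Emap n lam m v‖⁻¹ • tl v := by
  rw [normActE, tl_smul, tl_Emap]

lemma normActE_mem (hlam : 0 < lam) (m : ℤ) {v : EuclideanSpace ℝ (Fin (n + 1))}
    (hv : v ∈ OmegaPlus n) : normActE n lam m v ∈ OmegaPlus n := by
  have hv0 := ne_zero_of_mem hv
  have hE := norm_Emap_pos (n := n) hlam m hv0
  refine mem_omega_iff.2 ⟨norm_normActE hlam m hv0, ?_, ?_⟩
  · rw [normActE_apply_zero]
    have := hv.1.2
    positivity
  · intro h
    have ht : tl (normActE n lam m v) ≠ 0 := by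
      rw [tl_normActE]
      intro h'
      apply tl_ne_zero hv
      have : ‖Emap n lam m v‖ • ((‖Emap n lam m v‖⁻¹ : ℝ) • tl v) = 0 := by rw [h']; simp
      rwa [smul_smul, mul_inv_cancel₀ (ne_of_gt hE), one_smul] at this
    apply ht
    rw [h]
    ext k
    simp [tl_apply, EuclideanSpace.single_apply, Fin.succ_ne_zero]

lemma rho_normActE (hlam : 0 < lam) (m : ℤ) {v : EuclideanSpace ℝ (Fin (n + 1))}
    (hv : v ∈ OmegaPlus n) : rho (normActE n lam m v) = lam ^ m * rho v := by
  have hv0 := ne_zero_of_mem hv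
  have hE := norm_Emap_pos (n := n) hlam m hv0
  have ht := norm_tl_pos hv
  rw [rho, normActE_apply_zero, tl_normActE, norm_smul, norm_inv, norm_norm, rho]
  field_simp

lemma normActE_zero {v : EuclideanSpace ℝ (Fin (n + 1))} (hv : v ∈ OmegaPlus n) :
    normActE n lam 0 v = v := by
  rw [normActE, Emap_zero, hv.1.1]
  simp

lemma normActE_smul (hlam : 0 < lam) (m : ℤ) {c : ℝ} (hc : 0 < c)
    {v : EuclideanSpace ℝ (Fin (n + 1))} (hv : v ≠ 0) :
    normActE n lam m (c • v) = normActE n lam m v := by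
  have hE := norm_Emap_pos (n := n) hlam m hv
  rw [normActE, normActE, Emap_smul, norm_smul, Real.norm_eq_abs, abs_of_pos hc, mul_inv,
    smul_smul, mul_assoc, mul_comm _ c, ← mul_assoc, inv_mul_cancel₀ (ne_of_gt hc), one_mul]

lemma normActE_add (hlam : 0 < lam) (m₁ m₂ : ℤ) {v : EuclideanSpace ℝ (Fin (n + 1))}
    (hv : v ∈ OmegaPlus n) :
    normActE n lam (m₁ + m₂) v = normActE n lam m₁ (normActE n lam m₂ v) := by
  have hv0 := ne_zero_of_mem hv
  have hE := norm_Emap_pos (n := n) hlam m₂ hv0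
  have h1 : normActE n lam m₂ v = ‖Emap n lam m₂ v‖⁻¹ • Emap n lam m₂ v := rfl
  rw [h1, normActE_smul hlam m₁ (inv_pos.2 hE) (Emap_ne_zero hlam m₂ hv0),
    normActE, normActE, Emap_Emap hlam]

lemma normActE_free (hlam : 1 < lam) (m : ℤ) {v : EuclideanSpace ℝ (Fin (n + 1))}
    (hv : v ∈ OmegaPlus n) (h : normActE n lam m v = v) : m = 0 := by
  have hlam0 : (0 : ℝ) < lam := lt_trans one_pos hlam
  have hrho := rho_normActE hlam0 m hv
  rw [h] at hrho
  have hr := rho_pos hv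
  have : lam ^ m = 1 := by
    field_simp at hrho
    nlinarith [hrho]
  have h0 : lam ^ m = lam ^ (0 : ℤ) := by rw [this, zpow_zero]
  exact zpow_right_injective₀ hlam0 (ne_of_gt hlam) h0


lemma continuousOn_rho : ContinuousOn (rho (n := n)) (OmegaPlus n) :=
  ContinuousOn.div ((EuclideanSpace.proj (0 : Fin (n+1))).continuous.continuousOn)
    (continuous_tl.norm.continuousOn) (fun v hv => ne_of_gt (norm_tl_pos hv))

lemma finite_band (hlam : 1 < lam) {A B : ℝ} (hA : 0 < A) :
    {m : ℤ | A ≤ lam ^ m ∧ lam ^ m ≤ B}.Finite := by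
  obtain ⟨N₁, hN₁⟩ := pow_unbounded_of_one_lt B hlam
  obtain ⟨N₂, hN₂⟩ := pow_unbounded_of_one_lt A⁻¹ hlam
  apply Set.Finite.subset (Set.finite_Icc (-(N₂ : ℤ)) (N₁ : ℤ))
  rintro m ⟨h1, h2⟩
  have hlam0 : (0 : ℝ) < lam := lt_trans one_pos hlam
  constructor
  · have key : lam ^ (-(N₂ : ℤ)) < lam ^ m := by
      have hp : (0 : ℝ) < lam ^ N₂ := pow_pos hlam0 _
      have : (lam ^ N₂)⁻¹ < A := by
        rw [inv_lt_comm₀ hp hA] at *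
        exact hN₂
      calc lam ^ (-(N₂ : ℤ)) = (lam ^ (N₂ : ℤ))⁻¹ := by rw [zpow_neg]
        _ = (lam ^ N₂)⁻¹ := by rw [zpow_natCast]
        _ < A := this
        _ ≤ lam ^ m := h1
    exact le_of_lt ((zpow_lt_zpow_iff_right₀ hlam).1 key)
  · have key : lam ^ m < lam ^ (N₁ : ℤ) := by
      calc lam ^ m ≤ B := h2
        _ < lam ^ N₁ := hN₁
        _ = lam ^ (N₁ : ℤ) := by rw [zpow_natCast]
    exact le_of_lt ((zpow_lt_zpow_iff_right₀ hlam).1 key)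

lemma properly_disc (hlam : 1 < lam) (K L : Set (EuclideanSpace ℝ (Fin (n + 1))))
    (hK : K ⊆ OmegaPlus n) (hL : L ⊆ OmegaPlus n) (hKc : IsCompact K) (hLc : IsCompact L) :
    {m : ℤ | (normActE n lam m '' K ∩ L).Nonempty}.Finite := by
  have hlam0 : (0 : ℝ) < lam := lt_trans one_pos hlam
  rcases K.eq_empty_or_nonempty with rfl | hKne
  · simp
  rcases L.eq_empty_or_nonempty with rfl | hLne
  · simp
  obtain ⟨xK, hxK, haK⟩ := hKc.exists_isMinOn hKne (continuousOn_rho.mono hK)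
  obtain ⟨yK, hyK, hbK⟩ := hKc.exists_isMaxOn hKne (continuousOn_rho.mono hK)
  obtain ⟨xL, hxL, haL⟩ := hLc.exists_isMinOn hLne (continuousOn_rho.mono hL)
  obtain ⟨yL, hyL, hbL⟩ := hLc.exists_isMaxOn hLne (continuousOn_rho.mono hL)
  have haKpos : 0 < rho xK := rho_pos (hK hxK)
  have haLpos : 0 < rho xL := rho_pos (hL hxL)
  have hbKpos : 0 < rho yK := lt_of_lt_of_le haKpos (haK hyK)
  apply Set.Finite.subset (finite_band hlam (A := rho xL / rho yK) (B := rho yL / rho xK)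
    (div_pos haLpos hbKpos))
  rintro m ⟨y, ⟨x, hxK', rfl⟩, hyL'⟩
  have hxΩ := hK hxK'
  have hrx : rho (normActE n lam m x) = lam ^ m * rho x := rho_normActE hlam0 m hxΩ
  have hx1 : rho xK ≤ rho x := haK hxK'
  have hx2 : rho x ≤ rho yK := hbK hxK'
  have hy1 : rho xL ≤ rho (normActE n lam m x) := haL hyL'
  have hy2 : rho (normActE n lam m x) ≤ rho yL := hbL hyL'
  have hxpos : 0 < rho x := rho_pos hxΩ
  constructor
  · rw [div_le_iff₀ hbKpos]
    nlinarith [zpow_pos hlam0 m]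
  · rw [le_div_iff₀ haKpos]
    nlinarith [zpow_pos hlam0 m]


/-! ### The chart `Ω⁺ ≃ₜ S^{n-1} × ℝ` -/

def uDir (v : EuclideanSpace ℝ (Fin (n + 1))) : EuclideanSpace ℝ (Fin n) :=
  ‖tl v‖⁻¹ • tl v

def tCoord (lam : ℝ) (v : EuclideanSpace ℝ (Fin (n + 1))) : ℝ :=
  Real.logb lam (rho v)

lemma uDir_norm {v : EuclideanSpace ℝ (Fin (n + 1))} (hv : v ∈ OmegaPlus n) : ‖uDir v‖ = 1 := by
  have h := norm_tl_pos hv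
  rw [uDir, norm_smul, norm_inv, norm_norm, inv_mul_cancel₀ (ne_of_gt h)]

lemma uDir_smul {c : ℝ} (hc : 0 < c) (v : EuclideanSpace ℝ (Fin (n + 1)))
    (hv : tl v ≠ 0) : uDir (c • v) = uDir v := by
  have h : (0:ℝ) < ‖tl v‖ := norm_pos_iff.2 hv
  rw [uDir, uDir, tl_smul, norm_smul, Real.norm_eq_abs, abs_of_pos hc, mul_inv, smul_smul,
    mul_assoc, mul_comm _ c, ← mul_assoc, inv_mul_cancel₀ (ne_of_gt hc), one_mul]

lemma uDir_normActE (hlam : 0 < lam) (m : ℤ) {v : EuclideanSpace ℝ (Fin (n + 1))}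
    (hv : v ∈ OmegaPlus n) : uDir (normActE n lam m v) = uDir v := by
  have hE := norm_Emap_pos (n := n) hlam m (ne_zero_of_mem hv)
  have h1 : normActE n lam m v = ‖Emap n lam m v‖⁻¹ • Emap n lam m v := rfl
  rw [h1, uDir_smul (inv_pos.2 hE) _ (by rw [tl_Emap]; exact tl_ne_zero hv), uDir, tl_Emap]
  rfl

lemma tCoord_normActE (hlam : 1 < lam) (m : ℤ) {v : EuclideanSpace ℝ (Fin (n + 1))}
    (hv : v ∈ OmegaPlus n) : tCoord lam (normActE n lam m v) = m + tCoord lam v := by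
  have hlam0 : (0 : ℝ) < lam := lt_trans one_pos hlam
  have hρ := rho_pos hv
  rw [tCoord, tCoord, rho_normActE hlam0 m hv,
    Real.logb_mul (ne_of_gt (zpow_pos hlam0 m)) (ne_of_gt hρ)]
  congr 1
  rw [Real.logb, Real.log_zpow, mul_div_assoc,
    div_self (Real.log_ne_zero_of_pos_of_ne_one hlam0 (ne_of_gt hlam)), mul_one]

/-- building a vector from first coordinate and tail -/
def cns (a : ℝ) (u : EuclideanSpace ℝ (Fin n)) : EuclideanSpace ℝ (Fin (n + 1)) :=
  WithLp.toLp 2 (Fin.cons a (fun i => u i))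

lemma cns_zero (a : ℝ) (u : EuclideanSpace ℝ (Fin n)) : cns a u 0 = a := rfl

lemma tl_cns (a : ℝ) (u : EuclideanSpace ℝ (Fin n)) : tl (cns a u) = u := by
  ext k; rfl

lemma cns_eq {v : EuclideanSpace ℝ (Fin (n + 1))} : cns (v 0) (tl v) = v := by
  ext k
  rcases Fin.eq_zero_or_eq_succ k with rfl | ⟨j, rfl⟩
  · rfl
  · rfl

lemma norm_cns_sq (a : ℝ) (u : EuclideanSpace ℝ (Fin n)) :
    ‖cns a u‖ ^ 2 = a ^ 2 + ‖u‖ ^ 2 := by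
  rw [norm_sq, cns_zero, tl_cns]

lemma continuous_cns {α : Type*} [TopologicalSpace α] {a : α → ℝ}
    {u : α → EuclideanSpace ℝ (Fin n)} (ha : Continuous a) (hu : Continuous u) :
    Continuous fun x => cns (a x) (u x) := by
  have h1 : Continuous fun x : α => (fun k : Fin (n+1) => cns (a x) (u x) k : Fin (n+1) → ℝ) := by
    apply continuous_pi
    intro k
    rcases Fin.eq_zero_or_eq_succ k with rfl | ⟨j, rfl⟩
    · exact ha
    · exact ((EuclideanSpace.proj j).continuous.comp hu : Continuous fun x => u x j)
  exact (PiLp.continuous_toLp 2 fun _ : Fin (n+1) => ℝ).comp h1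


variable (n lam) in
def Phi (v : ↥(OmegaPlus n)) : ↥(Metric.sphere (0 : EuclideanSpace ℝ (Fin n)) 1) × ℝ :=
  (⟨uDir ↑v, by simpa [mem_sphere_iff_norm] using uDir_norm v.2⟩, tCoord lam (↑v : EuclideanSpace ℝ (Fin (n+1))))

def bld (lam : ℝ) (t : ℝ) (u : EuclideanSpace ℝ (Fin n)) : EuclideanSpace ℝ (Fin (n + 1)) :=
  let r := Real.exp (Real.log lam * t)
  let c := (Real.sqrt (1 + r ^ 2))⁻¹
  cns (r * c) (c • u)

lemma sqrt_pos' (r : ℝ) : 0 < Real.sqrt (1 + r ^ 2) :=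
  Real.sqrt_pos.2 (by positivity)

lemma bld_mem (hlam : 1 < lam) {u : EuclideanSpace ℝ (Fin n)} (hu : ‖u‖ = 1) (t : ℝ) :
    bld lam t u ∈ OmegaPlus n := by
  set r := Real.exp (Real.log lam * t) with hr
  have hrpos : 0 < r := Real.exp_pos _
  set s := Real.sqrt (1 + r ^ 2) with hs
  have hspos : 0 < s := sqrt_pos' r
  have hssq : s ^ 2 = 1 + r ^ 2 := Real.sq_sqrt (by positivity)
  refine mem_omega_iff.2 ⟨?_, ?_, ?_⟩
  · have : ‖bld lam t u‖ ^ 2 = 1 := by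
      rw [bld, norm_cns_sq, norm_smul, Real.norm_eq_abs, abs_of_pos (inv_pos.2 hspos), hu]
      field_simp
      nlinarith
    nlinarith [norm_nonneg (bld lam t u)]
  · rw [bld]
    show 0 < r * s⁻¹
    positivity
  · intro h
    have htl : tl (bld lam t u) = s⁻¹ • u := by rw [bld, tl_cns]
    have h0 : tl (bld lam t u) ≠ 0 := by
      rw [htl]
      intro hz
      have : ‖s⁻¹ • u‖ = 0 := by rw [hz]; simp
      rw [norm_smul, Real.norm_eq_abs, abs_of_pos (inv_pos.2 hspos), hu, mul_one] at this
      exact (ne_of_gt (inv_pos.2 hspos)) this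
    apply h0
    rw [h]
    ext k
    simp [tl_apply, EuclideanSpace.single_apply, Fin.succ_ne_zero]

lemma rho_bld (hlam : 1 < lam) {u : EuclideanSpace ℝ (Fin n)} (hu : ‖u‖ = 1) (t : ℝ) :
    rho (bld lam t u) = Real.exp (Real.log lam * t) := by
  set r := Real.exp (Real.log lam * t) with hr
  set s := Real.sqrt (1 + r ^ 2) with hs
  have hspos : 0 < s := sqrt_pos' r
  have h1 : tl (bld lam t u) = s⁻¹ • u := by rw [bld, tl_cns]
  rw [rho, h1, norm_smul, Real.norm_eq_abs, abs_of_pos (inv_pos.2 hspos), hu, mul_one]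
  show r * s⁻¹ / s⁻¹ = r
  field_simp

lemma tCoord_bld (hlam : 1 < lam) {u : EuclideanSpace ℝ (Fin n)} (hu : ‖u‖ = 1) (t : ℝ) :
    tCoord lam (bld lam t u) = t := by
  have hlam0 : (0 : ℝ) < lam := lt_trans one_pos hlam
  rw [tCoord, rho_bld hlam hu, Real.logb, Real.log_exp, mul_comm, mul_div_assoc,
    div_self (Real.log_ne_zero_of_pos_of_ne_one hlam0 (ne_of_gt hlam)), mul_one]

lemma uDir_bld (hlam : 1 < lam) {u : EuclideanSpace ℝ (Fin n)} (hu : ‖u‖ = 1) (t : ℝ) :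
    uDir (bld lam t u) = u := by
  set r := Real.exp (Real.log lam * t) with hr
  set s := Real.sqrt (1 + r ^ 2) with hs
  have hspos : 0 < s := sqrt_pos' r
  have h1 : tl (bld lam t u) = s⁻¹ • u := by rw [bld, tl_cns]
  rw [uDir, h1, norm_smul, Real.norm_eq_abs, abs_of_pos (inv_pos.2 hspos), hu, mul_one,
    inv_inv, smul_smul, mul_inv_cancel₀ (ne_of_gt hspos), one_smul]

lemma bld_eq_self (hlam : 1 < lam) {v : EuclideanSpace ℝ (Fin (n + 1))}
    (hv : v ∈ OmegaPlus n) : bld lam (tCoord lam v) (uDir v) = v := by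
  have hlam0 : (0 : ℝ) < lam := lt_trans one_pos hlam
  have hρ := rho_pos hv
  have hw := norm_tl_pos hv
  have hv0 := hv.1.2
  have hr : Real.exp (Real.log lam * tCoord lam v) = rho v := by
    rw [tCoord, Real.logb, mul_div_assoc']
    rw [mul_comm, mul_div_assoc, div_self (Real.log_ne_zero_of_pos_of_ne_one hlam0 (ne_of_gt hlam)),
      mul_one, Real.exp_log hρ]
  have hsq : 1 + rho v ^ 2 = (‖tl v‖ ^ 2)⁻¹ := by
    have hn := norm_sq v
    rw [hv.1.1] at hn
    rw [rho, div_pow]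
    field_simp
    nlinarith
  have hss : Real.sqrt (1 + rho v ^ 2) = ‖tl v‖⁻¹ := by
    rw [hsq, Real.sqrt_inv, Real.sqrt_sq hw.le]
  rw [bld]
  show cns _ _ = v
  rw [hr, hss, inv_inv]
  have h1 : rho v * ‖tl v‖ = v 0 := by rw [rho]; field_simp
  have h2 : ‖tl v‖ • uDir v = tl v := by
    rw [uDir, smul_smul, mul_inv_cancel₀ (ne_of_gt hw), one_smul]
  rw [h1, h2, cns_eq]

variable (n lam) in
def Psi (p : ↥(Metric.sphere (0 : EuclideanSpace ℝ (Fin n)) 1) × ℝ)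
    (hlam : 1 < lam) : ↥(OmegaPlus n) :=
  ⟨bld lam p.2 ↑p.1, bld_mem hlam (by simpa [mem_sphere_iff_norm] using p.1.2) p.2⟩


lemma continuous_Phi : Continuous (Phi n lam) := by
  have htl : Continuous fun v : ↥(OmegaPlus n) => tl (↑v : EuclideanSpace ℝ (Fin (n+1))) :=
    continuous_tl.comp continuous_subtype_val
  have hnorm : Continuous fun v : ↥(OmegaPlus n) =>
      ‖tl (↑v : EuclideanSpace ℝ (Fin (n+1)))‖ := htl.norm
  have hnz : ∀ v : ↥(OmegaPlus n), ‖tl (↑v : EuclideanSpace ℝ (Fin (n+1)))‖ ≠ 0 :=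
    fun v => ne_of_gt (norm_tl_pos v.2)
  have h0 : Continuous fun v : ↥(OmegaPlus n) => (↑v : EuclideanSpace ℝ (Fin (n+1))) 0 :=
    (EuclideanSpace.proj (0 : Fin (n+1))).continuous.comp continuous_subtype_val
  apply Continuous.prodMk
  · exact Continuous.subtype_mk ((hnorm.inv₀ hnz).smul htl) _
  · have hrho : Continuous fun v : ↥(OmegaPlus n) =>
        rho (↑v : EuclideanSpace ℝ (Fin (n+1))) := h0.div hnorm hnz
    have hrnz : ∀ v : ↥(OmegaPlus n), rho (↑v : EuclideanSpace ℝ (Fin (n+1))) ≠ 0 :=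
      fun v => ne_of_gt (rho_pos v.2)
    exact (hrho.log hrnz).div_const _

lemma continuous_Psi (hlam : 1 < lam) : Continuous fun p => Psi n lam p hlam := by
  have hr : Continuous fun p : ↥(Metric.sphere (0 : EuclideanSpace ℝ (Fin n)) 1) × ℝ =>
      Real.exp (Real.log lam * p.2) :=
    Real.continuous_exp.comp (continuous_const.mul continuous_snd)
  have hs : Continuous fun p : ↥(Metric.sphere (0 : EuclideanSpace ℝ (Fin n)) 1) × ℝ =>
      (Real.sqrt (1 + Real.exp (Real.log lam * p.2) ^ 2))⁻¹ := by
    apply Continuous.inv₀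
    · exact Real.continuous_sqrt.comp (continuous_const.add (hr.pow 2))
    · exact fun p => ne_of_gt (sqrt_pos' _)
  apply Continuous.subtype_mk
  exact continuous_cns (hr.mul hs)
    (hs.smul ((continuous_subtype_val.comp continuous_fst)))

variable (n lam) in
def chart (hlam : 1 < lam) :
    ↥(OmegaPlus n) ≃ₜ ↥(Metric.sphere (0 : EuclideanSpace ℝ (Fin n)) 1) × ℝ where
  toFun := Phi n lam
  invFun := fun p => Psi n lam p hlam
  left_inv := fun v => Subtype.ext (bld_eq_self hlam v.2)
  right_inv := fun p => by
    have hu : ‖(↑p.1 : EuclideanSpace ℝ (Fin n))‖ = 1 := by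
      simpa [mem_sphere_iff_norm] using p.1.2
    refine Prod.ext ?_ ?_
    · exact Subtype.ext (uDir_bld hlam hu p.2)
    · exact tCoord_bld hlam hu p.2
  continuous_toFun := continuous_Phi
  continuous_invFun := continuous_Psi hlam


variable (n lam) in
def Fmap (v : ↥(OmegaPlus n)) :
    ↥(Metric.sphere (0 : EuclideanSpace ℝ (Fin n)) 1) × AddCircle (1 : ℝ) :=
  ((Phi n lam v).1, ((Phi n lam v).2 : AddCircle (1 : ℝ)))

lemma isQuotientMap_Fmap (hlam : 1 < lam) : Topology.IsQuotientMap (Fmap n lam) := by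
  have hq : Topology.IsQuotientMap
      (fun p : ↥(Metric.sphere (0 : EuclideanSpace ℝ (Fin n)) 1) × ℝ =>
        (p.1, ((p.2 : ℝ) : AddCircle (1 : ℝ)))) := by
    apply IsOpenMap.isQuotientMap
    · exact IsOpenMap.prodMap IsOpenMap.id QuotientAddGroup.isOpenMap_coe
    · exact continuous_fst.prodMk (continuous_quotient_mk'.comp continuous_snd)
    · rintro ⟨u, q⟩
      obtain ⟨t, rfl⟩ := QuotientAddGroup.mk_surjective q
      exact ⟨(u, t), rfl⟩
  have h : Fmap n lam = (fun p : ↥(Metric.sphere (0 : EuclideanSpace ℝ (Fin n)) 1) × ℝ =>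
      (p.1, ((p.2 : ℝ) : AddCircle (1 : ℝ)))) ∘ (chart n lam hlam) := rfl
  rw [h]
  exact hq.comp (chart n lam hlam).isQuotientMap

lemma Fmap_eq_iff (hlam : 1 < lam) (a b : ↥(OmegaPlus n)) :
    Fmap n lam a = Fmap n lam b ↔ orbitRelE n lam a b := by
  have hlam0 : (0 : ℝ) < lam := lt_trans one_pos hlam
  constructor
  · intro h
    have h1 : uDir (↑a : EuclideanSpace ℝ (Fin (n+1))) = uDir ↑b :=
      congrArg (fun p => (p.1 : EuclideanSpace ℝ (Fin n))) h
    have h2 : ((tCoord lam (↑a : EuclideanSpace ℝ (Fin (n+1))) : ℝ) : AddCircle (1:ℝ)) =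
        ((tCoord lam (↑b : EuclideanSpace ℝ (Fin (n+1))) : ℝ) : AddCircle (1:ℝ)) :=
      congrArg Prod.snd h
    obtain ⟨k, hk⟩ := AddSubgroup.mem_zmultiples_iff.1 (QuotientAddGroup.eq.1 h2)
    have hk' : tCoord lam (↑b : EuclideanSpace ℝ (Fin (n+1))) = k + tCoord lam (↑a : EuclideanSpace ℝ (Fin (n+1))) := by
      have : (k : ℝ) = k • (1:ℝ) := by simp
      rw [this, hk]; ring
    refine ⟨k, ?_⟩
    have hmem := normActE_mem hlam0 k a.2
    have : Phi n lam ⟨normActE n lam k ↑a, hmem⟩ = Phi n lam b := by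
      refine Prod.ext (Subtype.ext ?_) ?_
      · exact (uDir_normActE hlam0 k a.2).trans h1
      · exact (tCoord_normActE hlam k a.2).trans hk'.symm
    have := (chart n lam hlam).injective this
    exact congrArg Subtype.val this
  · rintro ⟨m, hm⟩
    have hb : b = ⟨normActE n lam m ↑a, hm ▸ b.2⟩ := Subtype.ext hm.symm
    rw [hb]
    refine Prod.ext (Subtype.ext ?_) ?_
    · exact (uDir_normActE hlam0 m a.2).symm
    · show ((tCoord lam (↑a : EuclideanSpace ℝ (Fin (n+1))) : ℝ) : AddCircle (1:ℝ)) =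
        ((tCoord lam (normActE n lam m ↑a) : ℝ) : AddCircle (1:ℝ))
      rw [tCoord_normActE hlam m a.2]
      refine (QuotientAddGroup.eq.2 ?_)
      refine AddSubgroup.mem_zmultiples_iff.2 ⟨m, ?_⟩
      simp

def quotHomeo (hlam : 1 < lam) : Quot (orbitRelE n lam) ≃ₜ
    ↥(Metric.sphere (0 : EuclideanSpace ℝ (Fin n)) 1) × AddCircle (1 : ℝ) := by
  have hresp : ∀ a b, orbitRelE n lam a b → Fmap n lam a = Fmap n lam b :=
    fun a b h => (Fmap_eq_iff hlam a b).2 h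
  have hq := isQuotientMap_Fmap (n := n) hlam
  have hbij : Function.Bijective (Quot.lift (Fmap n lam) hresp) := by
    constructor
    · intro x y
      refine Quot.induction_on₂ x y ?_
      intro a b h
      exact Quot.sound ((Fmap_eq_iff hlam a b).1 h)
    · intro y
      obtain ⟨x, rfl⟩ := hq.surjective y
      exact ⟨Quot.mk _ x, rfl⟩
  refine Homeomorph.mk (Equiv.ofBijective _ hbij) ?_ ?_
  · exact continuous_quot_lift hresp hq.continuous
  · show Continuous ⇑(Equiv.ofBijective _ hbij).symm
    rw [hq.continuous_iff]
    have : ⇑(Equiv.ofBijective _ hbij).symm ∘ Fmap n lam = Quot.mk (orbitRelE n lam) := by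
      funext x
      exact (Equiv.symm_apply_eq _).2 rfl
    rw [this]
    exact continuous_quot_mk

end Aux

/-- For `n ≥ 2` and `λ > 1`, the `ℤ`-action `m • v := E_λ^m v / ‖E_λ^m v‖` on
`Ω⁺` is well-defined, free and properly discontinuous, and the quotient
`Ω⁺/ℤ` is homeomorphic to `S^{n-1} × (ℝ/ℤ)`. -/


theorem omegaPlus_action_and_quotient (n : ℕ) (hn : 2 ≤ n)
    (lam : ℝ) (hlam : 1 < lam) :
    (∀ (m : ℤ) (v : EuclideanSpace ℝ (Fin (n + 1))), v ∈ OmegaPlus n →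
      normActE n lam m v ∈ OmegaPlus n) ∧
    (∀ v ∈ OmegaPlus n, normActE n lam 0 v = v) ∧
    (∀ (m₁ m₂ : ℤ) (v : EuclideanSpace ℝ (Fin (n + 1))), v ∈ OmegaPlus n →
      normActE n lam (m₁ + m₂) v = normActE n lam m₁ (normActE n lam m₂ v)) ∧
    (∀ (m : ℤ) (v : EuclideanSpace ℝ (Fin (n + 1))), v ∈ OmegaPlus n →
      normActE n lam m v = v → m = 0) ∧
    (∀ K L : Set (EuclideanSpace ℝ (Fin (n + 1))), K ⊆ OmegaPlus n →
      L ⊆ OmegaPlus n → IsCompact K → IsCompact L →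
      {m : ℤ | (normActE n lam m '' K ∩ L).Nonempty}.Finite) ∧
    Nonempty (Quot (orbitRelE n lam) ≃ₜ
      (Metric.sphere (0 : EuclideanSpace ℝ (Fin n)) 1) × AddCircle (1 : ℝ)) := by
  have hlam0 : (0 : ℝ) < lam := lt_trans one_pos hlam
  exact ⟨fun m v hv => Aux.normActE_mem hlam0 m hv,
    fun v hv => Aux.normActE_zero hv,
    fun m₁ m₂ v hv => Aux.normActE_add hlam0 m₁ m₂ hv,
    fun m v hv h => Aux.normActE_free hlam m hv h,
    fun K L hK hL hKc hLc => Aux.properly_disc hlam K L hK hL hKc hLc,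
    ⟨Aux.quotHomeo hlam⟩⟩
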